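/- Let δ > 0 and A > 0, and suppose that M₂(x, h) ≤ A h x log x for all x ≥ 2 and all h with 1 ≤ h ≤ x^{1/2 + δ}. Then there is a constant C, depending only on A and δ, such that p_{n+1} − p_n ≤ C √(p_n log p_n) for all n ≥ 1. -/

import Mathlib

open scoped Classical
open MeasureTheory

/-- The n-th prime (0-indexed: `nthPrime 0 = 2`). -/
noncomputable def nthPrime (n : ℕ) : ℕ := Nat.nth Nat.Prime n

/-- The Chebyshev theta function θ(t) = Σ_{p ≤ t} log p. -/
noncomputable def chebTheta (t : ℝ) : ℝ :=
  ∑ p ∈ (Finset.range (⌊t⌋₊ + 1)).filter Nat.Prime, Real.log p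

/-- The second moment M₂(x, h) = ∫₁ˣ (θ(y+h) - θ(y) - h)² dy. -/
noncomputable def M2 (x h : ℝ) : ℝ :=
  ∫ y in (1:ℝ)..x, (chebTheta (y + h) - chebTheta y - h) ^ 2

lemma chebTheta_mono : Monotone chebTheta := by
  intro s t hst
  apply Finset.sum_le_sum_of_subset_of_nonneg
  · exact Finset.filter_subset_filter _
      (Finset.range_subset_range.2 (Nat.add_le_add_right (Nat.floor_mono hst) 1))
  · intro p hp _
    have hp' : Nat.Prime p := (Finset.mem_filter.1 hp).2
    exact Real.log_nonneg (by exact_mod_cast hp'.one_lt.le)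

lemma chebTheta_nonneg (t : ℝ) : 0 ≤ chebTheta t := by
  apply Finset.sum_nonneg
  intro p hp
  have hp' : Nat.Prime p := (Finset.mem_filter.1 hp).2
  exact Real.log_nonneg (by exact_mod_cast hp'.one_lt.le)

lemma nthPrime_prime (n : ℕ) : (nthPrime n).Prime := Nat.prime_nth_prime n

lemma nthPrime_lt_succ (n : ℕ) : nthPrime n < nthPrime (n + 1) :=
  (Nat.nth_lt_nth Nat.infinite_setOf_prime).2 (Nat.lt_succ_self n)

/-- No primes strictly between consecutive primes. -/
lemma nthPrime_succ_le {r : ℕ} (hr : r.Prime) {n : ℕ} (h : nthPrime n < r) :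
    nthPrime (n + 1) ≤ r := by
  have hr' : Nat.nth Nat.Prime (Nat.count Nat.Prime r) = r := Nat.nth_count hr
  have hn : n < Nat.count Nat.Prime r := by
    by_contra hc
    push_neg at hc
    have := Nat.nth_le_nth (p := Nat.Prime) Nat.infinite_setOf_prime |>.2 hc
    rw [hr'] at this
    exact absurd h (not_lt.2 this)
  calc nthPrime (n + 1) ≤ Nat.nth Nat.Prime (Nat.count Nat.Prime r) :=
        (Nat.nth_le_nth Nat.infinite_setOf_prime).2 hn
    _ = r := hr'

lemma nthPrime_succ_le_two_mul (n : ℕ) : nthPrime (n + 1) ≤ 2 * nthPrime n := by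
  obtain ⟨r, hr, h1, h2⟩ := Nat.exists_prime_lt_and_le_two_mul (nthPrime n)
    (nthPrime_prime n).pos.ne'
  exact (nthPrime_succ_le hr h1).trans h2

lemma two_le_nthPrime (n : ℕ) : 2 ≤ nthPrime n := (nthPrime_prime n).two_le

/-- θ is constant on prime-free stretches. -/
lemma chebTheta_eq_of_gap {n : ℕ} {y z : ℝ} (hy : (nthPrime n : ℝ) ≤ y)
    (hyz : y ≤ z) (hz : z < (nthPrime (n + 1) : ℝ)) : chebTheta z = chebTheta y := by
  have hz0 : (0 : ℝ) ≤ z := le_trans (by positivity) (hy.trans hyz)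
  unfold chebTheta
  congr 1
  ext r
  simp only [Finset.mem_filter, Finset.mem_range, Nat.lt_succ_iff]
  constructor
  · rintro ⟨hr1, hr2⟩
    refine ⟨Nat.le_floor ?_, hr2⟩
    have hrz : (r : ℝ) ≤ z := le_trans (Nat.cast_le.2 hr1) (Nat.floor_le hz0)
    have hrq : r < nthPrime (n + 1) := Nat.cast_lt.1 (lt_of_le_of_lt hrz hz)
    have hrp : r ≤ nthPrime n := by
      by_contra hc
      push_neg at hc
      exact absurd (nthPrime_succ_le hr2 hc) (not_le.2 hrq)
    exact le_trans (Nat.cast_le.2 hrp) hy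
  · rintro ⟨hr1, hr2⟩
    exact ⟨hr1.trans (Nat.floor_mono hyz), hr2⟩

lemma chebTheta_measurable : Measurable chebTheta := chebTheta_mono.measurable

lemma f_measurable (h : ℝ) :
    Measurable (fun y => (chebTheta (y + h) - chebTheta y - h) ^ 2) := by
  have h1 : Measurable (fun y : ℝ => chebTheta (y + h)) :=
    chebTheta_measurable.comp (measurable_add_const h)
  exact ((h1.sub chebTheta_measurable).sub measurable_const).pow measurable_const

lemma f_integrableOn (h x : ℝ) (hh : 0 ≤ h) :
    IntegrableOn (fun y => (chebTheta (y + h) - chebTheta y - h) ^ 2) (Set.Ioc 1 x) := by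
  refine Measure.integrableOn_of_bounded (μ := volume) (M := (chebTheta (x + h) + h) ^ 2)
    (measure_Ioc_lt_top).ne ((f_measurable h).aestronglyMeasurable) ?_
  refine MeasureTheory.ae_restrict_of_forall_mem measurableSet_Ioc ?_
  · skip
    intro y hy
    have h1 : chebTheta (y + h) ≤ chebTheta (x + h) := chebTheta_mono (by linarith [hy.2])
    have h2 : 0 ≤ chebTheta y := chebTheta_nonneg y
    have h3 : 0 ≤ chebTheta (y + h) := chebTheta_nonneg _
    have h4 : 0 ≤ chebTheta (x + h) := chebTheta_nonneg _
    have h5 : chebTheta y ≤ chebTheta (y + h) := chebTheta_mono (by linarith)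
    rw [Real.norm_eq_abs, abs_pow, ← abs_pow, abs_of_nonneg (by positivity)]
    have : |chebTheta (y + h) - chebTheta y - h| ≤ chebTheta (x + h) + h := by
      rw [abs_le]; constructor <;> nlinarith
    calc (chebTheta (y + h) - chebTheta y - h) ^ 2
        = |chebTheta (y + h) - chebTheta y - h| ^ 2 := (sq_abs _).symm
      _ ≤ (chebTheta (x + h) + h) ^ 2 := by
          apply pow_le_pow_left₀ (abs_nonneg _) this

/-- Lower bound for M2 from a prime gap. -/
lemma M2_lower {n : ℕ} {x h : ℝ} (hh0 : 0 ≤ h)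
    (hx : x = (nthPrime (n + 1) : ℝ))
    (hgap : (nthPrime n : ℝ) + h ≤ (nthPrime (n + 1) : ℝ)) :
    h ^ 2 * ((nthPrime (n + 1) : ℝ) - h - nthPrime n) ≤ M2 x h := by
  set p : ℝ := (nthPrime n : ℝ) with hp
  set q : ℝ := (nthPrime (n + 1) : ℝ) with hq
  have hp2 : (2 : ℝ) ≤ p := by rw [hp]; exact_mod_cast two_le_nthPrime n
  have hpq : p < q := by rw [hp, hq]; exact_mod_cast nthPrime_lt_succ n
  have h1x : (1 : ℝ) ≤ x := by rw [hx]; linarith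
  have hM2 : M2 x h = ∫ y in Set.Ioc 1 x, (chebTheta (y + h) - chebTheta y - h) ^ 2 :=
    intervalIntegral.integral_of_le h1x
  have hsub : Set.Ioo p (q - h) ⊆ Set.Ioc 1 x := by
    intro y hy
    rw [hx]
    exact ⟨by linarith [hy.1], by linarith [hy.2]⟩
  have hint := f_integrableOn h x hh0
  have hmono : ∫ y in Set.Ioo p (q - h), (chebTheta (y + h) - chebTheta y - h) ^ 2 ≤
      ∫ y in Set.Ioc 1 x, (chebTheta (y + h) - chebTheta y - h) ^ 2 := by
    apply setIntegral_mono_set hint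
    · filter_upwards with y using sq_nonneg _
    · exact HasSubset.Subset.eventuallyLE hsub
  have heq : ∫ y in Set.Ioo p (q - h), (chebTheta (y + h) - chebTheta y - h) ^ 2
      = h ^ 2 * (q - h - p) := by
    rw [setIntegral_congr_fun measurableSet_Ioo (g := fun _ => h ^ 2) ?_]
    · rw [setIntegral_const, Real.volume_real_Ioo_of_le (by linarith),
        smul_eq_mul]
      ring
    · intro y hy
      have : chebTheta (y + h) = chebTheta y := by
        apply chebTheta_eq_of_gap (n := n) (le_of_lt hy.1) (by linarith)
        rw [← hq]; linarith [hy.2]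
      simp only [this]
      ring
  rw [hM2]
  calc h ^ 2 * (q - h - p) = _ := heq.symm
    _ ≤ _ := hmono

set_option maxHeartbeats 1000000 in
/-- If M₂(x, h) ≤ A h x log x for 1 ≤ h ≤ x^{1/2+δ}, then
p_{n+1} - p_n ≤ C √(p_n log p_n) for all n. -/
theorem gap_bound_from_second_moment (δ A : ℝ) (hδ : 0 < δ) (hA : 0 < A)
    (hM : ∀ x h : ℝ, 2 ≤ x → 1 ≤ h → h ≤ x ^ ((1 : ℝ) / 2 + δ) →
      M2 x h ≤ A * h * x * Real.log x) :
    ∃ C : ℝ, ∀ n : ℕ,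
      (nthPrime (n + 1) : ℝ) - nthPrime n ≤
        C * Real.sqrt ((nthPrime n : ℝ) * Real.log (nthPrime n)) := by
  obtain ⟨N, hN⟩ := Filter.eventually_atTop.1
    ((isLittleO_log_rpow_atTop hδ).def (c := (16 * A)⁻¹) (by positivity))
  obtain ⟨N₀, hN₀3, hN₀'⟩ : ∃ N₀ : ℝ, 3 ≤ N₀ ∧
      ∀ t : ℝ, N₀ ≤ t → 16 * A * Real.log t ≤ t ^ δ := by
    refine ⟨max N 3, le_max_right _ _, fun t ht => ?_⟩
    have h1 := hN t (le_trans (le_max_left _ _) ht)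
    have ht1 : (1 : ℝ) ≤ t := by
      have := le_max_right N 3; linarith
    rw [Real.norm_eq_abs, Real.norm_eq_abs, abs_of_nonneg (Real.log_nonneg ht1),
      abs_of_nonneg (Real.rpow_nonneg (by linarith) δ)] at h1
    have h16 : (0 : ℝ) < 16 * A := by positivity
    calc 16 * A * Real.log t ≤ 16 * A * ((16 * A)⁻¹ * t ^ δ) :=
          mul_le_mul_of_nonneg_left h1 h16.le
      _ = t ^ δ := by field_simp
  have hsA : 0 ≤ Real.sqrt A := Real.sqrt_nonneg A
  set C₁ : ℝ := 4 * Real.sqrt A + 1 with hC₁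
  have hC₁1 : 1 ≤ C₁ := by rw [hC₁]; linarith
  refine ⟨C₁ + 2 * N₀, ?_⟩
  intro n
  obtain ⟨p, hpdef⟩ : ∃ p : ℝ, (nthPrime n : ℝ) = p := ⟨_, rfl⟩
  obtain ⟨q, hqdef⟩ : ∃ q : ℝ, (nthPrime (n + 1) : ℝ) = q := ⟨_, rfl⟩
  have hp2 : (2 : ℝ) ≤ p := by rw [← hpdef]; exact_mod_cast two_le_nthPrime n
  have hpq : p < q := by rw [← hpdef, ← hqdef]; exact_mod_cast nthPrime_lt_succ n
  have hq2p : q ≤ 2 * p := by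
    rw [← hpdef, ← hqdef]; exact_mod_cast nthPrime_succ_le_two_mul n
  have hlog2 : Real.log 2 ≤ Real.log p := Real.log_le_log two_pos hp2
  obtain ⟨s, hsdef⟩ : ∃ s : ℝ, Real.sqrt (p * Real.log p) = s := ⟨_, rfl⟩
  have hs0 : 0 ≤ s := hsdef ▸ Real.sqrt_nonneg _
  have hs1 : 1 ≤ s := by
    rw [← hsdef, show (1 : ℝ) = Real.sqrt 1 from Real.sqrt_one.symm]
    apply Real.sqrt_le_sqrt
    nlinarith [Real.log_two_gt_d9]
  rw [hpdef, hqdef, hsdef]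
  show q - p ≤ (C₁ + 2 * N₀) * s
  by_cases hsmall : p < N₀
  · have h1 : N₀ ≤ N₀ * s := le_mul_of_one_le_right (by linarith) hs1
    have h2 : 0 ≤ C₁ * s := mul_nonneg (by linarith) hs0
    linarith
  · push_neg at hsmall
    by_contra hcon
    push_neg at hcon
    obtain ⟨g, hgdef⟩ : ∃ g : ℝ, g = q - p := ⟨_, rfl⟩
    rw [← hgdef] at hcon
    have hN₀s : 0 ≤ N₀ * s := mul_nonneg (by linarith) hs0
    have hgC : C₁ * s < g := by linarith
    have hp3 : (3 : ℝ) ≤ p := le_trans hN₀3 hsmall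
    have hlogp1 : 1 ≤ Real.log p := by
      rw [Real.le_log_iff_exp_le (by linarith)]
      calc Real.exp 1 ≤ 2.7182818286 := Real.exp_one_lt_d9.le
        _ ≤ p := by linarith
    have hC₁s1 : 1 ≤ C₁ * s := by
      calc (1 : ℝ) = 1 * 1 := by ring
        _ ≤ C₁ * s := mul_le_mul hC₁1 hs1 (by norm_num) (by linarith)
    have hg1 : 1 < g := lt_of_le_of_lt hC₁s1 hgC
    have hq2 : p + 2 ≤ q := by
      have h1 : nthPrime n + 1 < nthPrime (n + 1) := by
        have h2 : (nthPrime n : ℝ) + 1 < (nthPrime (n + 1) : ℝ) := by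
          rw [hpdef, hqdef]; linarith
        exact_mod_cast h2
      have h3 : (nthPrime n : ℝ) + 2 ≤ (nthPrime (n + 1) : ℝ) := by exact_mod_cast h1
      rw [hpdef, hqdef] at h3; exact h3
    have hg2 : 2 ≤ g := by rw [hgdef]; linarith
    have hx2 : 2 ≤ q := by linarith
    set H : ℝ := q ^ ((1 : ℝ) / 2 + δ) with hHdef
    have hH1 : 1 ≤ H := Real.one_le_rpow (by linarith) (by linarith)
    set h : ℝ := min (g / 2) H with hhdef
    have hh1 : 1 ≤ h := le_min (by linarith) hH1
    have hh0 : (0 : ℝ) < h := by linarith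
    have hhH : h ≤ H := min_le_right _ _
    have hhg2 : h ≤ g / 2 := min_le_left _ _
    have hkey : h ^ 2 * (q - h - p) ≤ A * h * q * Real.log q := by
      refine le_trans ?_ (hM q h hx2 hh1 hhH)
      have h9 := M2_lower (n := n) (x := q) (h := h) (by linarith) hqdef.symm
        (by rw [hpdef, hqdef]; linarith)
      rw [hpdef, hqdef] at h9
      exact h9
    have hlogq1 : 0 ≤ Real.log q := Real.log_nonneg (by linarith)
    have hxlog : q * Real.log q ≤ 4 * (p * Real.log p) := by
      have hlx : Real.log q ≤ 2 * Real.log p := by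
        have h1 : Real.log q ≤ Real.log (2 * p) := Real.log_le_log (by linarith) (by linarith)
        rw [Real.log_mul (by norm_num) (by linarith)] at h1
        linarith
      calc q * Real.log q ≤ 2 * p * Real.log q :=
            mul_le_mul_of_nonneg_right hq2p hlogq1
        _ ≤ 2 * p * (2 * Real.log p) := by
            apply mul_le_mul_of_nonneg_left hlx (by linarith)
        _ = 4 * (p * Real.log p) := by ring
    have hkey2 : h * (g - h) ≤ 4 * A * (p * Real.log p) := by
      have h5 : A * h * (q * Real.log q) ≤ A * h * (4 * (p * Real.log p)) :=
        mul_le_mul_of_nonneg_left hxlog (by positivity)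
      have h6' : h * (h * (g - h)) ≤ h * (4 * A * (p * Real.log p)) := by
        calc h * (h * (g - h)) = h ^ 2 * (q - h - p) := by rw [hgdef]; ring
          _ ≤ A * h * q * Real.log q := hkey
          _ = A * h * (q * Real.log q) := by ring
          _ ≤ A * h * (4 * (p * Real.log p)) := h5
          _ = h * (4 * A * (p * Real.log p)) := by ring
      exact le_of_mul_le_mul_left h6' hh0
    have hplogp0 : (0 : ℝ) ≤ p * Real.log p := mul_nonneg (by linarith) (by linarith)
    have hs2 : s ^ 2 = p * Real.log p := by rw [← hsdef]; exact Real.sq_sqrt hplogp0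
    rcases le_total (g / 2) H with hcase | hcase
    · have hhe : h = g / 2 := min_eq_left hcase
      rw [hhe] at hkey2
      have hAs : Real.sqrt A ^ 2 = A := Real.sq_sqrt hA.le
      have hC₁s : 0 < C₁ * s := by linarith
      have hsq := mul_self_lt_mul_self hC₁s.le hgC
      have hexp : C₁ * s * (C₁ * s) = 16 * A * s ^ 2 + (8 * Real.sqrt A + 1) * s ^ 2 := by
        rw [hC₁]; linear_combination (16 * s ^ 2) * hAs
      have hkey2' : g * g / 4 ≤ 4 * A * s ^ 2 := by rw [hs2]; linarith
      have hnn : 0 ≤ (8 * Real.sqrt A + 1) * s ^ 2 :=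
        mul_nonneg (by linarith) (sq_nonneg s)
      linarith only [hsq, hexp, hkey2', hnn]
    · have hhe : h = H := min_eq_right hcase
      have hHp : p ^ ((1 : ℝ) / 2 + δ) ≤ H :=
        Real.rpow_le_rpow (by linarith) (by linarith) (by linarith)
      have hsplit : p ^ ((1 : ℝ) / 2 + δ) * p ^ ((1 : ℝ) / 2) = p * p ^ δ := by
        rw [← Real.rpow_add (by linarith : (0 : ℝ) < p),
          show (1 : ℝ) / 2 + δ + 1 / 2 = 1 + δ by ring,
          Real.rpow_add (by linarith : (0 : ℝ) < p), Real.rpow_one]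
      have hsqrtp : Real.sqrt p = p ^ ((1 : ℝ) / 2) := Real.sqrt_eq_rpow p
      have hgsp : Real.sqrt p < g := by
        have h1 : Real.sqrt p ≤ s := by
          rw [← hsdef]
          exact Real.sqrt_le_sqrt (le_mul_of_one_le_right (by linarith) hlogp1)
        have h2 : s ≤ C₁ * s := le_mul_of_one_le_left hs0 hC₁1
        linarith
      have hmain : p * p ^ δ / 2 ≤ 4 * A * (p * Real.log p) := by
        rw [hhe] at hkey2
        have hsp0 : 0 ≤ Real.sqrt p := Real.sqrt_nonneg p
        have hrp0 : 0 ≤ p ^ ((1 : ℝ) / 2 + δ) := Real.rpow_nonneg (by linarith) _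
        have h2 : p ^ ((1 : ℝ) / 2 + δ) * (Real.sqrt p / 2) ≤ H * (g / 2) := by
          apply mul_le_mul hHp (by linarith) (by linarith) (by linarith)
        calc p * p ^ δ / 2 = p ^ ((1 : ℝ) / 2 + δ) * (p ^ ((1 : ℝ) / 2) / 2) := by
              rw [← hsplit]; ring
          _ = p ^ ((1 : ℝ) / 2 + δ) * (Real.sqrt p / 2) := by rw [hsqrtp]
          _ ≤ H * (g / 2) := h2
          _ ≤ H * (g - H) := mul_le_mul_of_nonneg_left (by linarith) (by linarith)
          _ ≤ 4 * A * (p * Real.log p) := hkey2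
      have hNp := hN₀' p hsmall
      have hp0 : (0 : ℝ) < p := by linarith
      have hdiv : p ^ δ ≤ 8 * A * Real.log p := by
        have h1 : p * p ^ δ ≤ p * (8 * A * Real.log p) := by linarith
        exact le_of_mul_le_mul_left h1 hp0
      have hApos : 0 < A * Real.log p := mul_pos hA (by linarith)
      linarith
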